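/- Let l ≥ 8 be even and let k_2,…,k_l be positive natural numbers. Then 𝔉c([1, k_2, …, k_l]) + 𝔉([k_4 − 1, k_5, …, k_{l−3}, k_{l−2} − 1]) = 𝔉([k_3 − 1, k_4, …, k_{l−2}, k_{l−1} − 1]) + 𝔉([k_4 − 1, k_5, …, k_{l−1}, k_l − 1]) + 𝔉([k_2 − 1, k_3, …, k_{l−3}, k_{l−2} − 1]), where the 𝔉 terms are open-chain run-length fixed-point counts (a first or last run of length 0 corresponds to an empty block in the run-length encoding); equivalently, 𝔉c([1, k_2, …, k_l]) equals the sum of the three 𝔉 terms on the right minus 𝔉([k_4 − 1, k_5, …, k_{l−3}, k_{l−2} − 1]). -/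

import Mathlib

/-- The open-chain AND-OR network map determined by an operator list `ops`
(`true` = AND, `false` = OR), on `ops.length + 2` nodes. -/
def chainMap (ops : List Bool) (x : Fin (ops.length + 2) → Bool) :
    Fin (ops.length + 2) → Bool := fun i =>
  if h0 : (i : ℕ) = 0 then x ⟨1, by omega⟩
  else if hn : (i : ℕ) = ops.length + 1 then x ⟨ops.length, by omega⟩
  else
    have hi : 1 ≤ (i : ℕ) ∧ (i : ℕ) ≤ ops.length := by
      have := i.isLt; omega
    if ops.get ⟨(i : ℕ) - 1, by omega⟩
    then x ⟨(i : ℕ) - 1, by omega⟩ && x ⟨(i : ℕ) + 1, by omega⟩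
    else x ⟨(i : ℕ) - 1, by omega⟩ || x ⟨(i : ℕ) + 1, by omega⟩

/-- `F ops` is the number of fixed points of the open-chain AND-OR network. -/
noncomputable def F (ops : List Bool) : ℕ :=
  Nat.card {x : Fin (ops.length + 2) → Bool // chainMap ops x = x}

/-- Run-length encoding: block `j` (1-based) consists of `k_j` copies of
`true` if `j` is odd and `false` if `j` is even. -/
def runOps : List ℕ → List Bool
  | [] => []
  | k :: t => List.replicate k true ++ (runOps t).map (fun b => !b)

/-- `Fr L` = 𝔉(L), the number of fixed points of the open-chain AND-OR
network with run-length list `L`. -/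
noncomputable def Fr (L : List ℕ) : ℕ := F (runOps L)

/-- The closed-chain AND-OR network map on `ZMod n` determined by
`ops : ZMod n → Bool` (`true` = AND, `false` = OR). -/
def cycleMap {n : ℕ} (ops : ZMod n → Bool) (x : ZMod n → Bool) :
    ZMod n → Bool := fun i =>
  if ops i then x (i - 1) && x (i + 1) else x (i - 1) || x (i + 1)

/-- `Fc ops` is the number of fixed points of the closed-chain AND-OR network. -/
noncomputable def Fc {n : ℕ} (ops : ZMod n → Bool) : ℕ :=
  Nat.card {x : ZMod n → Bool // cycleMap ops x = x}

/-- The cyclic operator assignment for run-length list `L`: going cyclically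
from index `0`, a block of `k_j` consecutive values equal to `true` if `j` is
odd and `false` if `j` is even. -/
def cOps (L : List ℕ) : ZMod L.sum → Bool :=
  fun i => (runOps L).getD i.val false

/-- `Frc L` = 𝔉c(L), the number of fixed points of the closed-chain AND-OR
network with run-length list `L`. -/
noncomputable def Frc (L : List ℕ) : ℕ := Fc (cOps L)


abbrev S2 := Bool × Bool

def opv (op p r : Bool) : Bool := if op then p && r else p || r

def stepw (op p q r : Bool) : ℕ := if q = opv op p r then 1 else 0

def W : List Bool → S2 → S2 → ℕ
  | [], s, t => if s = t then 1 else 0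
  | op :: l, s, t =>
      stepw op s.1 s.2 true * W l (s.2, true) t +
      stepw op s.1 s.2 false * W l (s.2, false) t

def sum4 (f : S2 → ℕ) : ℕ := f (false,false) + f (false,true) + f (true,false) + f (true,true)

lemma W_append (l₁ l₂ : List Bool) (s t : S2) :
    W (l₁ ++ l₂) s t = sum4 (fun u => W l₁ s u * W l₂ u t) := by
  induction l₁ generalizing s with
  | nil =>
    obtain ⟨p, q⟩ := s
    cases p <;> cases q <;> obtain ⟨p', q'⟩ := t <;> cases p' <;> cases q' <;>
      simp [W, sum4]
  | cons op l ih =>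
    show W (op :: (l ++ l₂)) s t = _
    rw [show W (op :: (l ++ l₂)) s t = _ from rfl]
    simp only [W, ih, sum4]
    ring

lemma W_map_not (l : List Bool) (s t : S2) :
    W (l.map (fun b => !b)) s t = W l (!s.1, !s.2) (!t.1, !t.2) := by
  induction l generalizing s with
  | nil =>
    obtain ⟨p, q⟩ := s
    cases p <;> cases q <;> obtain ⟨p', q'⟩ := t <;> cases p' <;> cases q' <;>
      simp [W]
  | cons op l ih =>
    show W ((!op) :: l.map _) s t = _
    simp only [W, ih]
    have hstep : ∀ r : Bool, stepw (!op) s.1 s.2 r = stepw op (!s.1) (!s.2) (!r) := by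
      intro r
      obtain ⟨p, q⟩ := s
      cases op <;> cases p <;> cases q <;> cases r <;> decide
    rw [hstep true, hstep false]
    simp only [Bool.not_true, Bool.not_false]
    ring

def e1 (k : ℕ) : ℕ := if 1 ≤ k then 1 else 0
def e2 (k : ℕ) : ℕ := if 2 ≤ k then 1 else 0
def z0 (k : ℕ) : ℕ := if k = 0 then 1 else 0

def Afun (k : ℕ) : S2 → S2 → ℕ
  | (false,false), (false,false) => 1
  | (false,false), (false,true) => e1 k
  | (false,true), (false,true) => z0 k
  | (true,false), (false,false) => e1 k
  | (true,false), (false,true) => e2 k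
  | (true,false), (true,false) => z0 k
  | (true,true), (true,true) => 1
  | _, _ => 0

lemma W_replicate (k : ℕ) (s t : S2) :
    W (List.replicate k true) s t = Afun k s t := by
  induction k generalizing s with
  | zero =>
    obtain ⟨p, q⟩ := s
    cases p <;> cases q <;> obtain ⟨p', q'⟩ := t <;> cases p' <;> cases q' <;>
      simp [W, Afun, e1, e2, z0]
  | succ k ih =>
    show W (true :: List.replicate k true) s t = _
    simp only [W, ih]
    obtain ⟨p, q⟩ := s
    cases p <;> cases q <;> obtain ⟨p', q'⟩ := t <;> cases p' <;> cases q' <;>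
      simp [stepw, opv, Afun, e1, e2, z0] <;> (try split_ifs) <;> omega

/-! Counting configurations -/

def Conf (ops : List Bool) (s t : S2) (x : Fin (ops.length + 2) → Bool) : Prop :=
  x ⟨0, by omega⟩ = s.1 ∧ x ⟨1, by omega⟩ = s.2 ∧
  x ⟨ops.length, by omega⟩ = t.1 ∧ x ⟨ops.length + 1, by omega⟩ = t.2 ∧
  ∀ i : Fin ops.length,
    x ⟨i.1 + 1, by have := i.2; omega⟩ =
      opv (ops.get i) (x ⟨i.1, by have := i.2; omega⟩) (x ⟨i.1 + 2, by have := i.2; omega⟩)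

lemma nat_card_sigma {A : Type*} [Fintype A] (β : A → Type*) [∀ a, Finite (β a)] :
    Nat.card (Σ a, β a) = ∑ a : A, Nat.card (β a) := by
  classical
  letI : ∀ a, Fintype (β a) := fun a => Fintype.ofFinite _
  simp [Nat.card_eq_fintype_card, Fintype.card_sigma]

lemma nat_card_split {A Y : Type*} [Fintype A] [Finite Y] (C : A → Y → Prop) :
    Nat.card {p : A × Y // C p.1 p.2} = ∑ a : A, Nat.card {y : Y // C a y} := by
  rw [Nat.card_congr (Equiv.subtypeProdEquivSigmaSubtype C)]
  exact nat_card_sigma _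

lemma nat_card_split_bool {Y : Type*} [Finite Y] (C : Bool → Y → Prop) :
    Nat.card {p : Bool × Y // C p.1 p.2} =
      Nat.card {y : Y // C true y} + Nat.card {y : Y // C false y} := by
  rw [nat_card_split, Fintype.sum_bool]

lemma conf_cons_iff (op : Bool) (l : List Bool) (s t : S2)
    (x : Fin (l.length + 3) → Bool) :
    Conf (op :: l) s t x ↔
      x ⟨0, by omega⟩ = s.1 ∧ s.2 = opv op s.1 (x ⟨2, by omega⟩) ∧
        Conf l (s.2, x ⟨2, by omega⟩) t (Fin.tail x) := by
  show (_ ∧ _ ∧ _ ∧ _ ∧ ∀ i : Fin (l.length + 1), _) ↔ _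
  rw [Fin.forall_fin_succ]
  constructor
  · rintro ⟨h0, h1, h2, h3, hz, hs⟩
    have hz' : x ⟨1, by omega⟩ = opv op (x ⟨0, by omega⟩) (x ⟨2, by omega⟩) := hz
    rw [h0, h1] at hz'
    exact ⟨h0, hz', h1, rfl, h2, h3, fun i => hs i⟩
  · rintro ⟨h0, hz, c0, c1, c2, c3, c4⟩
    have c0' : x ⟨1, by omega⟩ = s.2 := c0
    refine ⟨h0, c0', c2, c3, ?_, fun i => c4 i⟩
    show x ⟨1, _⟩ = opv op (x ⟨0, _⟩) (x ⟨2, _⟩)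
    rw [h0, c0']
    exact hz

theorem card_conf (ops : List Bool) (s t : S2) :
    Nat.card {x : Fin (ops.length + 2) → Bool // Conf ops s t x} = W ops s t := by
  induction ops generalizing s with
  | nil =>
    show Nat.card {x : Fin 2 → Bool // Conf [] s t x} = _
    by_cases h : s = t
    · subst h
      haveI : Unique {x : Fin 2 → Bool // Conf [] s s x} := by
        refine ⟨⟨⟨fun i => if i.1 = 0 then s.1 else s.2, ?_⟩⟩, ?_⟩
        · exact ⟨rfl, rfl, rfl, rfl, fun i => i.elim0⟩
        · rintro ⟨x, h0, h1, _, _, _⟩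
          ext ⟨iv, hi⟩
          interval_cases iv
          · simpa using h0
          · simpa using h1
      rw [Nat.card_unique]
      simp [W]
    · haveI : IsEmpty {x : Fin 2 → Bool // Conf [] s t x} := by
        refine ⟨fun z => h ?_⟩
        obtain ⟨x, h0, h1, h2, h3, _⟩ := z
        exact Prod.ext (h0.symm.trans h2) (h1.symm.trans h3)
      rw [Nat.card_of_isEmpty]
      simp [W, h]
  | cons op l ih =>
    show Nat.card {x : Fin (l.length + 3) → Bool // Conf (op :: l) s t x} = _
    have key : Nat.card {x : Fin (l.length + 3) → Bool // Conf (op :: l) s t x} =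
        Nat.card {p : Bool × (Fin (l.length + 2) → Bool) //
          (Conf l (s.2, p.1) t p.2 ∧ s.2 = opv op s.1 p.1)} := by
      apply Nat.card_congr
      refine (Equiv.subtypeEquivRight (fun x => conf_cons_iff op l s t x)).trans ?_
      refine ⟨fun x => ⟨(x.1 ⟨2, by omega⟩, Fin.tail x.1), x.2.2.2, x.2.2.1⟩,
              fun p => ⟨Fin.cons s.1 p.1.2, rfl, ?_, ?_⟩, ?_, ?_⟩
      · have h2 : (Fin.cons s.1 p.1.2 : Fin (l.length + 3) → Bool) ⟨2, by omega⟩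
            = p.1.2 ⟨1, by omega⟩ := rfl
        rw [h2, p.2.1.2.1]
        exact p.2.2
      · have h2 : (Fin.cons s.1 p.1.2 : Fin (l.length + 3) → Bool) ⟨2, by omega⟩
            = p.1.2 ⟨1, by omega⟩ := rfl
        have ht : Fin.tail (Fin.cons s.1 p.1.2 : Fin (l.length + 3) → Bool) = p.1.2 := by
          funext j; rfl
        rw [h2, p.2.1.2.1, ht]
        exact p.2.1
      · rintro ⟨x, h0, hrest⟩
        apply Subtype.ext
        show Fin.cons s.1 (Fin.tail x) = x
        rw [← h0]
        funext j
        rcases j with ⟨jv, hj⟩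
        cases jv <;> rfl
      · rintro ⟨⟨r, y⟩, hc, hok⟩
        apply Subtype.ext
        apply Prod.ext
        · exact (show y ⟨1, by omega⟩ = r from hc.2.1)
        · show Fin.tail (Fin.cons s.1 y : Fin (l.length + 3) → Bool) = y
          funext j; rfl
    rw [key, nat_card_split_bool (fun r y => Conf l (s.2, r) t y ∧ s.2 = opv op s.1 r)]
    rw [show W (op :: l) s t = stepw op s.1 s.2 true * W l (s.2, true) t +
      stepw op s.1 s.2 false * W l (s.2, false) t from rfl]
    have hcase : ∀ r : Bool, Nat.card {y : Fin (l.length + 2) → Bool //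
        Conf l (s.2, r) t y ∧ s.2 = opv op s.1 r} = stepw op s.1 s.2 r * W l (s.2, r) t := by
      intro r
      by_cases hok : s.2 = opv op s.1 r
      · rw [Nat.card_congr (Equiv.subtypeEquivRight (fun y => and_iff_left hok)), ih (s.2, r)]
        rw [stepw, if_pos hok, one_mul]
      · haveI : IsEmpty {y : Fin (l.length + 2) → Bool //
            Conf l (s.2, r) t y ∧ s.2 = opv op s.1 r} := ⟨fun y => hok y.2.2⟩
        rw [Nat.card_of_isEmpty, stepw, if_neg hok, zero_mul]
    rw [hcase true, hcase false]

/-! Fixed points of the open chain -/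

lemma chainMap_fixed_iff (ops : List Bool) (x : Fin (ops.length + 2) → Bool) :
    chainMap ops x = x ↔
      (x ⟨1, by omega⟩ = x ⟨0, by omega⟩ ∧
       x ⟨ops.length, by omega⟩ = x ⟨ops.length + 1, by omega⟩ ∧
       ∀ i : Fin ops.length,
         x ⟨i.1 + 1, by have := i.2; omega⟩ =
           opv (ops.get i) (x ⟨i.1, by have := i.2; omega⟩)
             (x ⟨i.1 + 2, by have := i.2; omega⟩)) := by
  rw [funext_iff]
  constructor
  · intro h
    refine ⟨?_, ?_, fun i => ?_⟩
    · have := h ⟨0, by omega⟩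
      rw [chainMap] at this
      rw [dif_pos rfl] at this
      exact this
    · have := h ⟨ops.length + 1, by omega⟩
      rw [chainMap] at this
      rw [dif_neg (by simp), dif_pos rfl] at this
      exact this
    · have hi2 := i.2
      have := h ⟨i.1 + 1, by omega⟩
      rw [chainMap] at this
      rw [dif_neg (by simp), dif_neg (by simp; omega)] at this
      rw [opv]
      have ei : (⟨i.1 + 1 - 1, by omega⟩ : Fin (ops.length + 2)) = ⟨i.1, by omega⟩ :=
        Fin.ext (by simp)
      have eg : (⟨i.1 + 1 - 1, by omega⟩ : Fin ops.length) = ⟨i.1, by omega⟩ :=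
        Fin.ext (by simp)
      simp only [Nat.add_sub_cancel] at this
      exact this.symm
  · rintro ⟨h1, h2, h3⟩ i
    rcases i with ⟨iv, hi⟩
    rw [chainMap]
    by_cases hv0 : iv = 0
    · subst hv0
      rw [dif_pos rfl]
      exact h1
    · by_cases hvn : iv = ops.length + 1
      · subst hvn
        rw [dif_neg (by simpa using hv0), dif_pos rfl]
        exact h2
      · rw [dif_neg (by simpa using hv0), dif_neg (by simpa using hvn)]
        have := h3 ⟨iv - 1, by omega⟩
        rw [opv] at this
        have e1' : (⟨iv - 1 + 1, by omega⟩ : Fin (ops.length + 2)) = ⟨iv, hi⟩ :=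
          Fin.ext (by simp; omega)
        have e2' : (⟨iv - 1 + 2, by omega⟩ : Fin (ops.length + 2)) = ⟨iv + 1, by omega⟩ :=
          Fin.ext (by simp; omega)
        rw [e1', e2'] at this
        exact this.symm

lemma F_eq (ops : List Bool) :
    F ops = sum4 (fun p => W ops (p.1, p.1) (p.2, p.2)) := by
  have key : Nat.card {x : Fin (ops.length + 2) → Bool // chainMap ops x = x} =
      Nat.card {p : S2 × (Fin (ops.length + 2) → Bool) //
        Conf ops (p.1.1, p.1.1) (p.1.2, p.1.2) p.2} := by
    apply Nat.card_congr
    refine ⟨fun x => ⟨((x.1 ⟨0, by omega⟩, x.1 ⟨ops.length + 1, by omega⟩), x.1), ?_⟩,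
            fun p => ⟨p.1.2, ?_⟩, ?_, ?_⟩
    · obtain ⟨x, hx⟩ := x
      obtain ⟨hA, hB, hC⟩ := (chainMap_fixed_iff ops x).1 hx
      exact ⟨rfl, hA, hB, rfl, hC⟩
    · obtain ⟨⟨⟨b1, b2⟩, y⟩, c0, c1, c2, c3, c4⟩ := p
      apply (chainMap_fixed_iff ops y).2
      exact ⟨c1.trans c0.symm, c2.trans c3.symm, c4⟩
    · rintro ⟨x, hx⟩; rfl
    · rintro ⟨⟨⟨b1, b2⟩, y⟩, c0, c1, c2, c3, c4⟩
      exact Subtype.ext (Prod.ext (Prod.ext c0 c3) rfl)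
  rw [F, key]
  rw [nat_card_split (fun (p : S2) (y : Fin (ops.length + 2) → Bool) =>
    Conf ops (p.1, p.1) (p.2, p.2) y)]
  have : ∀ p : S2, Nat.card {y : Fin (ops.length + 2) → Bool //
      Conf ops (p.1, p.1) (p.2, p.2) y} = W ops (p.1, p.1) (p.2, p.2) :=
    fun p => card_conf ops (p.1, p.1) (p.2, p.2)
  simp only [this]
  rw [show (Finset.univ : Finset S2).sum (fun p => W ops (p.1, p.1) (p.2, p.2)) =
    ∑ b1 : Bool, ∑ b2 : Bool, W ops (b1, b1) (b2, b2) from Fintype.sum_prod_type _]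
  simp only [Fintype.sum_bool, sum4]
  ring

/-! Fixed points of the closed chain -/

lemma cycleMap_fixed_iff {n : ℕ} (c : ZMod n → Bool) (x : ZMod n → Bool) :
    cycleMap c x = x ↔ ∀ j : ZMod n, x j = opv (c j) (x (j - 1)) (x (j + 1)) := by
  rw [funext_iff]
  constructor
  · intro h j
    have := h j
    simp only [cycleMap, opv] at this ⊢
    exact this.symm
  · intro h j
    have := h j
    simp only [cycleMap, opv] at this ⊢
    exact this.symm

lemma card_cycle (n : ℕ) (hn : 2 ≤ n) (c : ZMod n → Bool) (OPS : List Bool)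
    (hlen : OPS.length = n)
    (hget : ∀ (i : ℕ) (h : i < OPS.length), OPS.get ⟨i, h⟩ = c (((i + 1 : ℕ) : ZMod n))) :
    Nat.card {x : ZMod n → Bool // cycleMap c x = x} =
      sum4 (fun p => W OPS p p) := by
  haveI : NeZero n := ⟨by omega⟩
  haveI : Fact (1 < n) := ⟨by omega⟩
  have hyeq : ∀ (y : Fin (OPS.length + 2) → Bool) {k k' : ℕ}
      (hk : k < OPS.length + 2) (hk' : k' < OPS.length + 2), k = k' →
      y ⟨k, hk⟩ = y ⟨k', hk'⟩ := by
    intro y k k' hk hk' h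
    subst h; rfl
  have key : Nat.card {x : ZMod n → Bool // cycleMap c x = x} =
      Nat.card {p : S2 × (Fin (OPS.length + 2) → Bool) // Conf OPS p.1 p.1 p.2} := by
    apply Nat.card_congr
    refine ⟨fun x => ⟨((x.1 0, x.1 1), fun i => x.1 ((i : ℕ) : ZMod n)), ?_⟩,
            fun p => ⟨fun j => p.1.2 ⟨j.val, by have := ZMod.val_lt j; omega⟩, ?_⟩, ?_, ?_⟩
    · obtain ⟨x, hx⟩ := x
      have hfix := (cycleMap_fixed_iff c x).1 hx
      refine ⟨?_, ?_, ?_, ?_, ?_⟩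
      · show x ((0 : ℕ) : ZMod n) = x 0
        norm_num
      · show x ((1 : ℕ) : ZMod n) = x 1
        norm_num
      · show x ((OPS.length : ℕ) : ZMod n) = x 0
        rw [hlen, ZMod.natCast_self]
      · show x (((OPS.length + 1 : ℕ)) : ZMod n) = x 1
        rw [hlen]
        push_cast
        rw [ZMod.natCast_self, zero_add]
      · intro i
        show x (((i.1 + 1 : ℕ)) : ZMod n) =
          opv (OPS.get i) (x ((i.1 : ℕ) : ZMod n)) (x (((i.1 + 2 : ℕ)) : ZMod n))
        have hfx := hfix (((i.1 + 1 : ℕ)) : ZMod n)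
        rw [hget i.1 i.2]
        have e1' : ((i.1 + 1 : ℕ) : ZMod n) - 1 = ((i.1 : ℕ) : ZMod n) := by
          push_cast; ring
        have e2' : ((i.1 + 1 : ℕ) : ZMod n) + 1 = ((i.1 + 2 : ℕ) : ZMod n) := by
          push_cast; ring
        rw [e1', e2'] at hfx
        exact hfx
    · obtain ⟨⟨⟨b1, b2⟩, y⟩, c0, c1, c2, c3, c4⟩ := p
      simp only at c0 c1 c2 c3 c4
      have hmod : ∀ k : ℕ, k % n < OPS.length + 2 := by
        intro k
        have := Nat.mod_lt k (show 0 < n by omega)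
        omega
      have hy : ∀ (k : ℕ) (hk : k < OPS.length + 2), y ⟨k % n, hmod k⟩ = y ⟨k, hk⟩ := by
        intro k hk
        rcases (show k < n ∨ k = n ∨ k = n + 1 by omega) with h | h | h
        · exact hyeq y _ _ (Nat.mod_eq_of_lt h)
        · have hk0 : k % n = 0 := by rw [h]; exact Nat.mod_self n
          calc y ⟨k % n, hmod k⟩ = y ⟨0, by omega⟩ := hyeq y _ _ hk0
            _ = b1 := c0
            _ = y ⟨OPS.length, by omega⟩ := c2.symm
            _ = y ⟨k, hk⟩ := hyeq y _ _ (by omega)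
        · have hk1 : k % n = 1 := by
            rw [h, Nat.add_mod_left]
            exact Nat.mod_eq_of_lt (by omega)
          calc y ⟨k % n, hmod k⟩ = y ⟨1, by omega⟩ := hyeq y _ _ hk1
            _ = b2 := c1
            _ = y ⟨OPS.length + 1, by omega⟩ := c3.symm
            _ = y ⟨k, hk⟩ := hyeq y _ _ (by omega)
      apply (cycleMap_fixed_iff c _).2
      intro j
      obtain ⟨i, hiv, hj⟩ : ∃ i : ℕ, i < n ∧ ((i + 1 : ℕ) : ZMod n) = j :=
        ⟨(j - 1).val, ZMod.val_lt _, by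
          push_cast
          rw [ZMod.natCast_val, ZMod.cast_id]
          ring⟩
      have ev : ∀ (m : ℕ) (z : ZMod n), ((m : ℕ) : ZMod n) = z →
          ∀ (hz2 : z.val < OPS.length + 2),
          y ⟨z.val, hz2⟩ = y ⟨m % n, hmod m⟩ := by
        intro m z hz hz2
        subst hz
        exact hyeq y _ _ (ZMod.val_natCast n m)
      have egj := ev (i + 1) j hj
      have egm := ev i (j - 1) (by rw [← hj]; push_cast; ring)
      have egp := ev (i + 2) (j + 1) (by rw [← hj]; push_cast; ring)
      show y ⟨j.val, by have := ZMod.val_lt j; omega⟩ = opv (c j)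
        (y ⟨(j-1).val, by have := ZMod.val_lt (j-1); omega⟩)
        (y ⟨(j+1).val, by have := ZMod.val_lt (j+1); omega⟩)
      rw [egj _, egm _, egp _, hy (i + 1) (by omega), hy (i + 2) (by omega),
        hyeq y (hmod i) (by omega : i < OPS.length + 2) (Nat.mod_eq_of_lt hiv),
        ← hj, ← hget i (by omega)]
      exact c4 ⟨i, by omega⟩
    · rintro ⟨x, hx⟩
      apply Subtype.ext
      funext j
      show x (((j.val : ℕ)) : ZMod n) = x j
      rw [ZMod.natCast_val, ZMod.cast_id]
    · rintro ⟨⟨⟨b1, b2⟩, y⟩, c0, c1, c2, c3, c4⟩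
      simp only at c0 c1 c2 c3 c4
      have hmod : ∀ k : ℕ, k % n < OPS.length + 2 := by
        intro k
        have := Nat.mod_lt k (show 0 < n by omega)
        omega
      have hy : ∀ (k : ℕ) (hk : k < OPS.length + 2), y ⟨k % n, hmod k⟩ = y ⟨k, hk⟩ := by
        intro k hk
        rcases (show k < n ∨ k = n ∨ k = n + 1 by omega) with h | h | h
        · exact hyeq y _ _ (Nat.mod_eq_of_lt h)
        · have hk0 : k % n = 0 := by rw [h]; exact Nat.mod_self n
          calc y ⟨k % n, hmod k⟩ = y ⟨0, by omega⟩ := hyeq y _ _ hk0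
            _ = b1 := c0
            _ = y ⟨OPS.length, by omega⟩ := c2.symm
            _ = y ⟨k, hk⟩ := hyeq y _ _ (by omega)
        · have hk1 : k % n = 1 := by
            rw [h, Nat.add_mod_left]
            exact Nat.mod_eq_of_lt (by omega)
          calc y ⟨k % n, hmod k⟩ = y ⟨1, by omega⟩ := hyeq y _ _ hk1
            _ = b2 := c1
            _ = y ⟨OPS.length + 1, by omega⟩ := c3.symm
            _ = y ⟨k, hk⟩ := hyeq y _ _ (by omega)
      apply Subtype.ext
      refine Prod.ext (Prod.ext ?_ ?_) ?_
      · show y ⟨(0 : ZMod n).val, _⟩ = b1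
        rw [hyeq y _ (by omega : (0:ℕ) < OPS.length + 2) ZMod.val_zero]
        exact c0
      · show y ⟨(1 : ZMod n).val, _⟩ = b2
        rw [hyeq y _ (by omega : (1:ℕ) < OPS.length + 2) (ZMod.val_one n)]
        exact c1
      · funext i
        show y ⟨((i.1 : ℕ) : ZMod n).val, _⟩ = y i
        rw [hyeq y _ (hmod i.1) (ZMod.val_natCast n i.1)]
        exact (hy i.1 i.2).trans (hyeq y _ _ rfl)
  rw [key]
  rw [nat_card_split (fun (p : S2) (y : Fin (OPS.length + 2) → Bool) => Conf OPS p p y)]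
  simp only [card_conf]
  rw [show (Finset.univ : Finset S2).sum (fun p => W OPS p p) =
    ∑ b1 : Bool, ∑ b2 : Bool, W OPS (b1, b2) (b1, b2) from Fintype.sum_prod_type _]
  simp only [Fintype.sum_bool, sum4]
  ring

/-! runOps lemmas and the cyclic specialization -/

lemma runOps_length (L : List ℕ) : (runOps L).length = L.sum := by
  induction L with
  | nil => simp [runOps]
  | cons k t ih => simp [runOps, ih]

lemma runOps_append (L1 L2 : List ℕ) :
    runOps (L1 ++ L2) = runOps L1 ++
      (if Even L1.length then runOps L2 else (runOps L2).map (fun b => !b)) := by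
  induction L1 with
  | nil => simp [runOps]
  | cons k t ih =>
    show runOps (k :: (t ++ L2)) = _
    rw [runOps, ih, runOps]
    by_cases h : Even t.length
    · rw [if_pos h, if_neg (by simp [Nat.even_add_one, h])]
      simp [List.map_append]
    · rw [if_neg h, if_pos (by simp [Nat.even_add_one, h])]
      rw [List.map_append, List.map_map,
        show ((fun b : Bool => !b) ∘ fun b => !b) = id from funext fun b => Bool.not_not b,
        List.map_id, List.append_assoc]

lemma runOps_append_odd {L1 : List ℕ} (h : Odd L1.length) (L2 : List ℕ) :
    runOps (L1 ++ L2) = runOps L1 ++ (runOps L2).map (fun b => !b) := by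
  rw [runOps_append, if_neg (by rw [Nat.even_iff]; rw [Nat.odd_iff] at h; omega)]

lemma frc_eq (R : List ℕ) (h2 : 2 ≤ (1 :: R).sum) :
    Frc (1 :: R) = sum4 (fun p =>
      W ((runOps R).map (fun b => !b) ++ List.replicate 1 true) p p) := by
  have hRlen : ((runOps R).map (fun b => !b) ++ List.replicate 1 true).length = (1 :: R).sum := by
    simp [runOps_length]
    omega
  have hruns : runOps (1 :: R) = true :: (runOps R).map (fun b => !b) := by
    rw [runOps]
    rfl
  rw [Frc, Fc]
  apply card_cycle _ h2 (cOps (1 :: R)) _ hRlen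
  intro i h
  have hsum : (1 :: R).sum = R.sum + 1 := by simp; omega
  have hi : i < R.sum + 1 := by
    rw [hRlen, hsum] at h
    exact h
  have hmaplen : ((runOps R).map (fun b => !b)).length = R.sum := by
    simp [runOps_length]
  rw [cOps]
  rw [ZMod.val_natCast, hruns, List.get_eq_getElem, List.getElem_append]
  simp only [Fin.val_mk]
  rcases (show i < R.sum ∨ i = R.sum by omega) with hlt | heq
  · rw [dif_pos (by omega)]
    have : (i + 1) % (1 :: R).sum = i + 1 := Nat.mod_eq_of_lt (by omega)
    rw [this, List.getD_cons_succ, List.getD_eq_getElem _ _ (by omega)]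
  · rw [dif_neg (by omega)]
    have : (i + 1) % (1 :: R).sum = 0 := by rw [hsum, heq]; simp
    rw [this, List.getD_cons_zero, List.getElem_replicate]

/-! value lemmas for indicators -/

lemma e1_of_pos {k : ℕ} (h : 1 ≤ k) : e1 k = 1 := by rw [e1, if_pos h]
lemma z0_of_pos {k : ℕ} (h : 1 ≤ k) : z0 k = 0 := by rw [z0, if_neg (by omega)]
lemma e1_pred {k : ℕ} (h : 1 ≤ k) : e1 (k - 1) = e2 k := by
  rw [e1, e2]
  split_ifs <;> omega
lemma e1_one : e1 1 = 1 := rfl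
lemma e2_one : e2 1 = 0 := rfl
lemma z0_one : z0 1 = 0 := rfl

lemma map_not_not (l : List Bool) : (l.map (fun b => !b)).map (fun b => !b) = l := by
  rw [List.map_map,
    show ((fun b : Bool => !b) ∘ fun b => !b) = id from funext fun b => Bool.not_not b,
    List.map_id]

/-- for `l ≥ 8` even and the closed-chain run-length list
`[1, k₂, …, k_l]` (here written `1 :: a :: b :: c :: M ++ [d, e, f]`, with
`a = k₂`, `b = k₃`, `c = k₄`, `M = [k₅, …, k_{l-3}]`, `d = k_{l-2}`,
`e = k_{l-1}`, `f = k_l`),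
`𝔉c([1,k₂,…,k_l]) + 𝔉(k₄-1,k₅,…,k_{l-3},k_{l-2}-1)
  = 𝔉(k₃-1,k₄,…,k_{l-2},k_{l-1}-1) + 𝔉(k₄-1,k₅,…,k_{l-1},k_l-1)
    + 𝔉(k₂-1,k₃,…,k_{l-3},k_{l-2}-1)`. -/
theorem andor_closed_chain_recursion_one (a b c d e f : ℕ) (M : List ℕ)
    (ha : 1 ≤ a) (hb : 1 ≤ b) (hc : 1 ≤ c) (hd : 1 ≤ d) (he : 1 ≤ e)
    (hf : 1 ≤ f) (hM : ∀ k ∈ M, 1 ≤ k) (hMlen : 1 ≤ M.length)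
    (hModd : Odd M.length) :
    Frc (1 :: a :: b :: c :: M ++ [d, e, f]) + Fr ((c - 1) :: M ++ [d - 1]) =
      Fr ((b - 1) :: c :: M ++ [d, e - 1]) +
      Fr ((c - 1) :: M ++ [d, e, f - 1]) +
      Fr ((a - 1) :: b :: c :: M ++ [d - 1]) := by
  have eM : ∀ Y, runOps (M ++ Y) = runOps M ++ (runOps Y).map (fun b => !b) :=
    fun Y => runOps_append_odd hModd Y
  have eM' : ∀ Y, runOps (M.append Y) = runOps M ++ (runOps Y).map (fun b => !b) :=
    fun Y => runOps_append_odd hModd Y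
  have hsum2 : 2 ≤ (1 :: (a :: b :: c :: (M ++ [d, e, f]))).sum := by
    simp
    omega
  rw [show (1 : ℕ) :: a :: b :: c :: M ++ [d, e, f]
      = 1 :: (a :: b :: c :: (M ++ [d, e, f])) from rfl,
    frc_eq _ hsum2]
  simp only [Fr]
  simp only [F_eq]
  simp only [List.cons_append, runOps, eM, eM', List.map_append, map_not_not, List.map_nil, List.append_nil]
  simp only [W_append, sum4, W_map_not, W_replicate]
  simp only [Afun, Bool.not_false, Bool.not_true]
  simp only [e1_of_pos ha, e1_of_pos hb, e1_of_pos hc, e1_of_pos hd, e1_of_pos he,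
    e1_of_pos hf, z0_of_pos ha, z0_of_pos hb, z0_of_pos hc, z0_of_pos hd, z0_of_pos he,
    z0_of_pos hf, e1_pred ha, e1_pred hb, e1_pred hc, e1_pred hd, e1_pred he, e1_pred hf,
    e1_one, e2_one, z0_one, mul_zero, zero_mul, mul_one, one_mul, add_zero, zero_add]
  ring
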